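/- For any natural x < 2^62, the HAKMEM-169 computation returns ν(x): let b1 = (x >>> 1) &&& T, a1 = x - b1, b2 = (b1 >>> 1) &&& T, a2 = a1 - b2, a3 = (a2 + (a2 >>> 3)) &&& H; then a3 mod 63 = ν(x), where T is the 62-bit mask with binary pattern 011 repeated (octal 3 in every digit ... i.e., bits set at positions ≢ 2 mod 3: T = sum over k of 3 * 8^k truncated to 62 bits) and H is the mask with octal digits 07 alternating (binary 000111 repeated: H = sum over k of 7 * 64^k truncated to 62 bits). -/

import Mathlib

def nu (n : ℕ) : ℕ := (Nat.bits n).count true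

lemma nu_zero : nu 0 = 0 := by simp [nu, Nat.zero_bits]

lemma nu_bit (b q : ℕ) (hb : b ≤ 1) : nu (b + 2*q) = b + nu q := by
  interval_cases b
  · rcases Nat.eq_zero_or_pos q with h | h
    · simp [h, nu_zero]
    · simp [nu, Nat.bit0_bits q (by omega)]
  · rw [show 1 + 2*q = 2*q+1 by ring]
    unfold nu
    rw [Nat.bit1_bits q]
    simp [List.count_cons]
    omega

lemma nu_add_pow (m : ℕ) : ∀ e q : ℕ, e < 2^m → nu (e + 2^m * q) = nu e + nu q := by
  induction m with
  | zero =>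
    intro e q he
    interval_cases e
    simp [nu_zero]
  | succ m ih =>
    intro e q he
    have h2 : e % 2 + 2 * (e/2) = e := by omega
    have h1 : e % 2 + 2 * (e/2 + 2^m * q) = e + 2^(m+1) * q := by
      rw [Nat.mul_add, ← Nat.add_assoc, h2, pow_succ]; ring
    rw [← h1, nu_bit _ _ (by omega), ih (e/2) q (by omega), ← Nat.add_assoc,
      ← nu_bit (e%2) (e/2) (by omega), h2]

lemma nu_sum_digits : ∀ n : ℕ, ∀ x : ℕ, x < 8^n →
    nu x = ∑ k ∈ Finset.range n, nu (x / 8^k % 8) := by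
  intro n
  induction n with
  | zero => intro x hx; interval_cases x; simp [nu_zero]
  | succ n ih =>
    intro x hx
    rw [Finset.sum_range_succ']
    have hx8 : x % 8 + 8 * (x / 8) = x := Nat.mod_add_div x 8
    have hsplit : nu x = nu (x % 8) + nu (x / 8) := by
      conv_lhs => rw [← hx8]
      rw [show (8:ℕ) = 2^3 by norm_num]
      exact nu_add_pow 3 _ _ (by omega)
    rw [hsplit, ih (x/8) (by rw [pow_succ] at hx; omega)]
    simp only [pow_zero, Nat.div_one]
    rw [Nat.add_comm]
    congr 1
    apply Finset.sum_congr rfl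
    intro k _
    congr 2
    rw [Nat.div_div_eq_div_mul, ← pow_succ']

lemma sum_lt_pow {B : ℕ} (_hB : 0 < B) (u : ℕ → ℕ) (hu : ∀ k, u k < B) :
    ∀ n, ∑ k ∈ Finset.range n, u k * B^k < B^n := by
  intro n
  induction n with
  | zero => simp
  | succ n ih =>
    rw [Finset.sum_range_succ]
    calc ∑ k ∈ Finset.range n, u k * B^k + u n * B^n
        < B^n + u n * B^n := Nat.add_lt_add_right ih _
      _ = (u n + 1) * B^n := by ring
      _ ≤ B * B^n := Nat.mul_le_mul_right _ (hu n)
      _ = B^(n+1) := by rw [pow_succ]; ring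

lemma digit_of_sum {B : ℕ} (hB : 0 < B) :
    ∀ (m n : ℕ) (u : ℕ → ℕ), (∀ k, u k < B) → m < n →
    (∑ k ∈ Finset.range n, u k * B^k) / B^m % B = u m := by
  intro m
  induction m with
  | zero =>
    intro n u hu hm
    obtain ⟨n', rfl⟩ : ∃ n', n = n' + 1 := ⟨n - 1, by omega⟩
    rw [Finset.sum_range_succ']
    simp only [pow_zero, Nat.div_one, mul_one]
    have hrw : (∑ k ∈ Finset.range n', u (k+1) * B^(k+1)) = B * ∑ k ∈ Finset.range n', u (k+1) * B^k := by
      rw [Finset.mul_sum]; apply Finset.sum_congr rfl; intros; rw [pow_succ]; ring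
    rw [hrw, Nat.mul_add_mod, Nat.mod_eq_of_lt (hu 0)]
  | succ m ih =>
    intro n u hu hm
    obtain ⟨n', rfl⟩ : ∃ n', n = n' + 1 := ⟨n - 1, by omega⟩
    rw [Finset.sum_range_succ']
    have hrw : (∑ k ∈ Finset.range n', u (k+1) * B^(k+1)) = B * ∑ k ∈ Finset.range n', u (k+1) * B^k := by
      rw [Finset.mul_sum]; apply Finset.sum_congr rfl; intros; rw [pow_succ]; ring
    rw [hrw, pow_zero, mul_one, pow_succ', ← Nat.div_div_eq_div_mul]
    rw [show (B * ∑ k ∈ Finset.range n', u (k+1) * B^k + u 0) / B = ∑ k ∈ Finset.range n', u (k+1) * B^k from by rw [Nat.mul_add_div hB, Nat.div_eq_of_lt (hu 0), Nat.add_zero]]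
    exact ih n' (fun k => u (k+1)) (fun k => hu (k+1)) (by omega)

lemma sum_digits {B : ℕ} (hB : 1 < B) : ∀ n x : ℕ, x < B^n →
    ∑ k ∈ Finset.range n, (x / B^k % B) * B^k = x := by
  intro n
  induction n with
  | zero =>
    intro x hx
    have : x = 0 := by simpa using hx
    simp [this]
  | succ n ih =>
    intro x hx
    rw [Finset.sum_range_succ']
    simp only [pow_zero, Nat.div_one, mul_one]
    have hterm : ∀ k, x / B^(k+1) % B * B^(k+1) = B * ((x/B) / B^k % B * B^k) := by
      intro k
      rw [Nat.div_div_eq_div_mul, ← pow_succ', pow_succ']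
      ring
    rw [Finset.sum_congr rfl (fun k _ => hterm k), ← Finset.mul_sum,
      ih (x/B) (by rw [Nat.div_lt_iff_lt_mul (by omega), ← pow_succ]; exact hx)]
    exact Nat.div_add_mod x B

lemma and_mod_two_pow (a b m : ℕ) : (a &&& b) % 2^m = (a % 2^m) &&& (b % 2^m) := by
  apply Nat.eq_of_testBit_eq; intro i
  simp only [Nat.testBit_and, Nat.testBit_mod_two_pow]
  by_cases h : i < m <;> simp [h]

lemma and_div_two_pow (a b m : ℕ) : (a &&& b) / 2^m = (a / 2^m) &&& (b / 2^m) := by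
  induction m with
  | zero => simp
  | succ m ih =>
    rw [pow_succ, ← Nat.div_div_eq_div_mul, ih, Nat.and_div_two,
      Nat.div_div_eq_div_mul, Nat.div_div_eq_div_mul, ← pow_succ]

lemma block_and {B m : ℕ} (hBm : B = 2^m) :
    ∀ (n : ℕ) (u v : ℕ → ℕ), (∀ k, u k < B) → (∀ k, v k < B) →
    (∑ k ∈ Finset.range n, u k * B^k) &&& (∑ k ∈ Finset.range n, v k * B^k)
      = ∑ k ∈ Finset.range n, (u k &&& v k) * B^k := by
  subst hBm
  intro n
  induction n with
  | zero => simp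
  | succ n ih =>
    intro u v hu hv
    rw [Finset.sum_range_succ', Finset.sum_range_succ', Finset.sum_range_succ']
    simp only [pow_zero, mul_one]
    have hrw : ∀ w : ℕ → ℕ, (∑ k ∈ Finset.range n, w (k+1) * (2^m)^(k+1))
        = 2^m * ∑ k ∈ Finset.range n, w (k+1) * (2^m)^k := by
      intro w; rw [Finset.mul_sum]; apply Finset.sum_congr rfl; intros; rw [pow_succ']; ring
    rw [hrw u, hrw v, hrw (fun k => u k &&& v k)]
    have key : ∀ a c s t : ℕ, a < 2^m → c < 2^m →
        (2^m * s + a) &&& (2^m * t + c) = 2^m * (s &&& t) + (a &&& c) := by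
      intro a c s t ha hc
      have hmod : ((2^m*s+a) &&& (2^m*t+c)) % 2^m = a &&& c := by
        rw [and_mod_two_pow, Nat.mul_add_mod, Nat.mul_add_mod,
          Nat.mod_eq_of_lt ha, Nat.mod_eq_of_lt hc]
      have hdiv : ((2^m*s+a) &&& (2^m*t+c)) / 2^m = s &&& t := by
        rw [and_div_two_pow, Nat.mul_add_div (by positivity), Nat.mul_add_div (by positivity),
          Nat.div_eq_of_lt ha, Nat.div_eq_of_lt hc, Nat.add_zero, Nat.add_zero]
      conv_lhs => rw [← Nat.div_add_mod ((2^m*s+a) &&& (2^m*t+c)) (2^m)]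
      rw [hmod, hdiv]
    rw [key _ _ _ _ (hu 0) (hv 0), ih (fun k => u (k+1)) (fun k => v (k+1))
      (fun k => hu (k+1)) (fun k => hv (k+1))]

lemma sum_pair (f : ℕ → ℕ) : ∀ n, ∑ k ∈ Finset.range (2*n), f k
    = ∑ j ∈ Finset.range n, (f (2*j) + f (2*j+1)) := by
  intro n
  induction n with
  | zero => simp
  | succ n ih =>
    rw [Finset.sum_range_succ, ← ih, show 2*(n+1) = (2*n+1)+1 by ring,
      Finset.sum_range_succ, Finset.sum_range_succ]
    ring

lemma half_and (y : ℕ) (hy : y < 8^21) :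
    (y >>> 1) &&& (∑ k ∈ Finset.range 21, 3 * 8^k)
      = ∑ k ∈ Finset.range 21, (y / 8^k % 8) / 2 * 8^k := by
  have h1 : y >>> 1 = y / 2 := by simp [Nat.shiftRight_eq_div_pow]
  have hy2 : y / 2 < 8^21 := lt_of_le_of_lt (Nat.div_le_self _ _) hy
  rw [h1, ← sum_digits (by norm_num) 21 (y/2) hy2,
    block_and (show (8:ℕ) = 2^3 by norm_num) 21 _ _
      (fun k => by omega) (fun k => by omega)]
  apply Finset.sum_congr rfl
  intro k _
  congr 1
  rw [Nat.div_div_eq_div_mul, Nat.mul_comm, ← Nat.div_div_eq_div_mul]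
  have h3 := Nat.and_two_pow_sub_one_eq_mod (y / 8^k / 2 % 8) 2
  norm_num at h3
  rw [h3]
  omega

lemma nu_double (q : ℕ) : nu (2*q) = nu q := by
  have h := nu_bit 0 q (by omega); simpa using h

lemma nu_double_add_one (q : ℕ) : nu (2*q+1) = nu q + 1 := by
  have h := nu_bit 1 q (by omega)
  rw [show 2*q+1 = 1+2*q by ring, h]; omega

lemma nu_lt8 (d : ℕ) (hd : d < 8) : nu d = d - d/2 - d/4 := by
  have h1 : nu 1 = 1 := by rw [show (1:ℕ) = 2*0+1 by norm_num, nu_double_add_one, nu_zero]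
  have h2 : nu 2 = 1 := by rw [show (2:ℕ) = 2*1 by norm_num, nu_double, h1]
  have h3 : nu 3 = 2 := by rw [show (3:ℕ) = 2*1+1 by norm_num, nu_double_add_one, h1]
  have h4 : nu 4 = 1 := by rw [show (4:ℕ) = 2*2 by norm_num, nu_double, h2]
  have h5 : nu 5 = 2 := by rw [show (5:ℕ) = 2*2+1 by norm_num, nu_double_add_one, h2]
  have h6 : nu 6 = 2 := by rw [show (6:ℕ) = 2*3 by norm_num, nu_double, h3]
  have h7 : nu 7 = 3 := by rw [show (7:ℕ) = 2*3+1 by norm_num, nu_double_add_one, h3]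
  interval_cases d <;> norm_num [nu_zero, h1, h2, h3, h4, h5, h6, h7]

theorem stmt_19 (x : ℕ) (hx : x < 2 ^ 62)
    (T : ℕ) (hT : T = ∑ k ∈ Finset.range 21, 3 * 8 ^ k)
    (H : ℕ) (hH : H = ∑ k ∈ Finset.range 11, 7 * 64 ^ k) :
    (((x - ((x >>> 1) &&& T)) - ((((x >>> 1) &&& T) >>> 1) &&& T)) +
        (((x - ((x >>> 1) &&& T)) - ((((x >>> 1) &&& T) >>> 1) &&& T)) >>> 3)
          &&& H) % 63 = nu x := by
  have hx21 : x < 8^21 := lt_of_lt_of_le hx (by norm_num)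
  obtain ⟨e, he⟩ : ∃ e : ℕ → ℕ, ∀ k, e k = x / 8^k % 8 := ⟨_, fun _ => rfl⟩
  obtain ⟨c, hc⟩ : ∃ c : ℕ → ℕ, ∀ k, c k = e k - e k/2 - e k/4 := ⟨_, fun _ => rfl⟩
  have he8 : ∀ k, e k < 8 := fun k => by rw [he]; exact Nat.mod_lt _ (by norm_num)
  have hd2 : ∀ k, e k / 2 < 8 := fun k => by have := he8 k; omega
  have h1 : (x >>> 1) &&& T = ∑ k ∈ Finset.range 21, (e k / 2) * 8^k := by
    rw [hT, half_and x hx21]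
    apply Finset.sum_congr rfl; intro k _
    rw [he]
  have hb1lt : (x >>> 1) &&& T < 8^21 := by
    rw [h1]; exact sum_lt_pow (by norm_num) _ hd2 21
  have h2 : (((x >>> 1) &&& T) >>> 1) &&& T = ∑ k ∈ Finset.range 21, (e k / 4) * 8^k := by
    conv_lhs => rw [hT]
    rw [half_and _ (by rw [← hT]; exact hb1lt)]
    apply Finset.sum_congr rfl
    intro k hk
    have hdig : ((x >>> 1) &&& T) / 8^k % 8 = e k / 2 := by
      rw [h1]; exact digit_of_sum (by norm_num) k 21 _ hd2 (Finset.mem_range.mp hk)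
    rw [← hT, hdig]
    congr 1
    omega
  have hsum_e : ∑ k ∈ Finset.range 21, e k * 8^k = x := by
    simp only [he]; exact sum_digits (by norm_num) 21 x hx21
  have key1 : ∑ k ∈ Finset.range 21, (e k - e k/2) * 8^k + ∑ k ∈ Finset.range 21, (e k/2) * 8^k = x := by
    rw [← Finset.sum_add_distrib, ← hsum_e]
    apply Finset.sum_congr rfl; intro k _
    have h := he8 k
    have hek : e k - e k/2 + e k/2 = e k := by omega
    rw [← Nat.add_mul, hek]
  have key2 : ∑ k ∈ Finset.range 21, c k * 8^k + ∑ k ∈ Finset.range 21, (e k/4) * 8^k = ∑ k ∈ Finset.range 21, (e k - e k/2) * 8^k := by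
    rw [← Finset.sum_add_distrib]
    apply Finset.sum_congr rfl; intro k _
    have h := he8 k
    have hek : c k + e k/4 = e k - e k/2 := by rw [hc]; omega
    rw [← Nat.add_mul, hek]
  have hA : x - ((x >>> 1) &&& T) - ((((x >>> 1) &&& T) >>> 1) &&& T) = ∑ k ∈ Finset.range 21, c k * 8^k := by
    rw [h2, h1]; omega
  have hc3 : ∀ k, c k ≤ 3 := fun k => by have := he8 k; rw [hc]; omega
  have hc0 : ∀ k, 21 ≤ k → c k = 0 := by
    intro k hk
    have hz : x / 8^k = 0 :=
      Nat.div_eq_of_lt (lt_of_lt_of_le hx21 (Nat.pow_le_pow_right (by norm_num) hk))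
    rw [hc, he, hz]
  set A := x - ((x >>> 1) &&& T) - ((((x >>> 1) &&& T) >>> 1) &&& T) with hAdef
  have hA3 : A >>> 3 = ∑ k ∈ Finset.range 21, c (k+1) * 8^k := by
    rw [Nat.shiftRight_eq_div_pow, show (2:ℕ)^3 = 8 by norm_num, hA, Finset.sum_range_succ']
    have hrw : (∑ k ∈ Finset.range 20, c (k+1) * 8^(k+1)) = 8 * ∑ k ∈ Finset.range 20, c (k+1) * 8^k := by
      rw [Finset.mul_sum]; apply Finset.sum_congr rfl; intros; rw [pow_succ]; ring
    rw [hrw, pow_zero, mul_one, Nat.mul_add_div (by norm_num),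
      Nat.div_eq_of_lt (by have := hc3 0; omega), Nat.add_zero]
    conv_rhs => rw [Finset.sum_range_succ]
    rw [hc0 (20+1) (by omega)]
    simp
  have hsum : A + A >>> 3 = ∑ k ∈ Finset.range 22, (c k + c (k+1)) * 8^k := by
    rw [hA3, hA]
    have hA22 : ∑ k ∈ Finset.range 21, c k * 8^k = ∑ k ∈ Finset.range 22, c k * 8^k := by
      rw [Finset.sum_range_succ (n := 21), hc0 21 le_rfl]; simp
    have hA322 : ∑ k ∈ Finset.range 21, c (k+1) * 8^k = ∑ k ∈ Finset.range 22, c (k+1) * 8^k := by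
      rw [Finset.sum_range_succ (n := 21), hc0 (21+1) (by omega)]; simp
    rw [hA22, hA322, ← Finset.sum_add_distrib]
    apply Finset.sum_congr rfl; intros; ring
  have hpair : ∑ k ∈ Finset.range 22, (c k + c (k+1)) * 8^k
      = ∑ j ∈ Finset.range 11, ((c (2*j) + c (2*j+1)) + 8 * (c (2*j+1) + c (2*j+1+1))) * 64^j := by
    rw [show (22:ℕ) = 2*11 by norm_num, sum_pair]
    apply Finset.sum_congr rfl; intro j _
    have h64 : (8:ℕ)^(2*j) = 64^j := by rw [pow_mul]; norm_num
    have h64' : (8:ℕ)^(2*j+1) = 8 * 64^j := by rw [pow_succ, h64]; ring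
    rw [h64, h64']; ring
  have hw : ∀ j, (c (2*j) + c (2*j+1)) + 8 * (c (2*j+1) + c (2*j+1+1)) < 64 := fun j => by
    have := hc3 (2*j); have := hc3 (2*j+1); have := hc3 (2*j+1+1); omega
  have hH2 : (A + A >>> 3) &&& H = ∑ j ∈ Finset.range 11, (c (2*j) + c (2*j+1)) * 64^j := by
    rw [hsum, hpair, hH, block_and (show (64:ℕ) = 2^6 by norm_num) 11 _ _ hw (fun k => by omega)]
    apply Finset.sum_congr rfl; intro j _
    have h7 := Nat.and_two_pow_sub_one_eq_mod ((c (2*j) + c (2*j+1)) + 8 * (c (2*j+1) + c (2*j+1+1))) 3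
    norm_num at h7
    rw [h7,
      Nat.mod_eq_of_lt (show c (2*j) + c (2*j+1) < 8 by have := hc3 (2*j); have := hc3 (2*j+1); omega)]
  rw [hH2, Finset.sum_nat_mod]
  have hmod64 : ∀ j ∈ Finset.range 11, (c (2*j) + c (2*j+1)) * 64^j % 63 = (c (2*j) + c (2*j+1)) % 63 := by
    intro j _; rw [Nat.mul_mod, Nat.pow_mod]; norm_num
  rw [Finset.sum_congr rfl hmod64, ← Finset.sum_nat_mod]
  have hps : ∑ j ∈ Finset.range 11, (c (2*j) + c (2*j+1)) = ∑ k ∈ Finset.range 22, c k := by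
    rw [show (22:ℕ) = 2*11 by norm_num, sum_pair]
  rw [hps, Finset.sum_range_succ, hc0 21 le_rfl, add_zero]
  have hnu : nu x = ∑ k ∈ Finset.range 21, c k := by
    rw [nu_sum_digits 21 x hx21]
    apply Finset.sum_congr rfl; intro k _
    rw [hc, he, nu_lt8 _ (show x / 8^k % 8 < 8 from Nat.mod_lt _ (by norm_num))]
  rw [hnu]
  have h20 : c 20 ≤ 2 := by
    have hlt : x / 8^20 < 4 := by
      rw [show (8:ℕ)^20 = 2^60 by norm_num, Nat.div_lt_iff_lt_mul (by positivity)]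
      calc x < 2^62 := hx
        _ ≤ 4 * 2^60 := by norm_num
    rw [hc, he]
    generalize x / 8^20 = d at hlt ⊢
    omega
  have hrest : ∑ k ∈ Finset.range 20, c k ≤ 60 := by
    calc ∑ k ∈ Finset.range 20, c k ≤ ∑ k ∈ Finset.range 20, 3 :=
        Finset.sum_le_sum (fun k _ => hc3 k)
      _ = 60 := by simp
  have hle : ∑ k ∈ Finset.range 21, c k ≤ 62 := by
    rw [Finset.sum_range_succ]; omega
  exact Nat.mod_eq_of_lt (by omega)
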